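/- arXiv:2308.07028 — 2 statements merged into one kernel-verified Lean document; each statement's English description precedes it below -/
import Mathlib

section
/- Let R = ⊕_{i≥0} R_i be a commutative nonnegatively graded ring, I ⊆ R a homogeneous ideal with degree-zero component I_0 = I ∩ R_0, and M a graded R-module such that M_j = 0 for all j < n_0. Then for every i ∈ ℤ and every integer n with n ≥ i − n_0, the degree-i component of I^n M satisfies (I^n M)_i ⊆ I_0^{\,n + n_0 − i}·M_i. -/
/-!
STATEMENT 1: Let `R = ⊕_{i≥0} R_i` be a commutative nonnegatively graded ring, `I ⊆ R` a
homogeneous ideal with degree-zero component `I₀ = I ∩ R₀`, and `M` a graded `R`-module with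
`M_j = 0` for `j < n₀`.  Then for every `i ∈ ℤ` and every `n ≥ i - n₀`, the degree-`i` component
of `I^n M` satisfies `(I^n M)_i ⊆ I₀^(n + n₀ - i) · M_i`.

We model the gradings internally: `𝒜 : ℤ → AddSubgroup R` is a `GradedRing` which vanishes in
negative degrees, and `ℳ : ℤ → AddSubgroup M` is a decomposition of `M` compatible with the
grading of `R` (`SetLike.GradedSMul`).  The submodule `I₀^m · M_i` is rendered as the additive
subgroup of `M` generated by the elements `(c₁ * ⋯ * c_m) • z` with each `c_j ∈ I ∩ R₀` and
`z ∈ M_i` (this agrees with the `R₀`-submodule generated by such elements, since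
`R₀ • M_i ⊆ M_i`).
-/

open DirectSum

-- Auxiliary: the generating set for I^n • ⊤ by homogeneous products
theorem aux_memA
    (R : Type*) [CommRing R] (𝒜 : ℤ → AddSubgroup R) [GradedRing 𝒜]
    (M : Type*) [AddCommGroup M] [Module R M]
    (ℳ : ℤ → AddSubgroup M) [DirectSum.Decomposition ℳ]
    (I : Ideal R) (hI : I.IsHomogeneous 𝒜) (n : ℕ) :
    ∀ x : M, x ∈ (I ^ n • ⊤ : Submodule R M) →
      x ∈ AddSubgroup.closure
        {x : M | ∃ (d : Fin n → ℤ) (a : Fin n → R),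
          (∀ k, a k ∈ I ∧ a k ∈ 𝒜 (d k)) ∧ ∃ j : ℤ, ∃ m ∈ ℳ j, x = (∏ k, a k) • m} := by
  classical
  induction n with
  | zero =>
    intro x _
    rw [← DirectSum.sum_support_decompose ℳ x]
    refine AddSubgroup.sum_mem _ fun j _ => AddSubgroup.subset_closure ?_
    exact ⟨Fin.elim0, Fin.elim0, fun k => k.elim0, j, _, (decompose ℳ x j).2, by simp⟩
  | succ n ih =>
    intro x hx
    rw [pow_succ', ← smul_eq_mul, Submodule.smul_assoc] at hx
    refine Submodule.smul_induction_on hx (fun r hr y hy => ?_)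
      (fun y z hy hz => AddSubgroup.add_mem _ hy hz)
    have hy' := ih y hy
    refine AddSubgroup.closure_induction (fun g hg => ?_) (by simpa using AddSubgroup.zero_mem _)
      (fun u v _ _ hu hv => by rw [smul_add]; exact AddSubgroup.add_mem _ hu hv)
      (fun u _ hu => by rw [smul_neg]; exact AddSubgroup.neg_mem _ hu) hy'
    obtain ⟨d, a, ha, j, m, hm, rfl⟩ := hg
    rw [smul_smul, ← DirectSum.sum_support_decompose 𝒜 r, Finset.sum_mul,
      Finset.sum_smul]
    refine AddSubgroup.sum_mem _ fun e _ => AddSubgroup.subset_closure ?_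
    refine ⟨Fin.cons e d, Fin.cons ((decompose 𝒜 r e : R)) a, ?_, j, m, hm, ?_⟩
    · intro k
      refine Fin.cases ?_ (fun k => ?_) k
      · exact ⟨hI e hr, (decompose 𝒜 r e).2⟩
      · simpa using ha k
    · rw [Fin.prod_cons]

theorem statement1
    (R : Type*) [CommRing R] (𝒜 : ℤ → AddSubgroup R) [GradedRing 𝒜]
    (hneg : ∀ i : ℤ, i < 0 → 𝒜 i = ⊥)
    (M : Type*) [AddCommGroup M] [Module R M]
    (ℳ : ℤ → AddSubgroup M) [DirectSum.Decomposition ℳ] [SetLike.GradedSMul 𝒜 ℳ]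
    (I : Ideal R) (hI : I.IsHomogeneous 𝒜)
    (n₀ : ℤ) (hlow : ∀ j : ℤ, j < n₀ → ℳ j = ⊥)
    (i : ℤ) (n : ℕ) (hn : i - n₀ ≤ (n : ℤ)) :
    ∀ x : M, x ∈ (I ^ n • ⊤ : Submodule R M) → x ∈ ℳ i →
      x ∈ AddSubgroup.closure
        {y : M | ∃ c : Fin ((n : ℤ) + n₀ - i).toNat → R,
          (∀ j, c j ∈ I ∧ c j ∈ 𝒜 0) ∧ ∃ z ∈ ℳ i, y = (∏ j, c j) • z} := by
  classical
  intro x hx hxi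
  set m' : ℕ := ((n : ℤ) + n₀ - i).toNat with hm'
  set Tgt := AddSubgroup.closure
        {y : M | ∃ c : Fin m' → R,
          (∀ j, c j ∈ I ∧ c j ∈ 𝒜 0) ∧ ∃ z ∈ ℳ i, y = (∏ j, c j) • z} with hTgt
  -- the additive hom taking degree-i component
  let f : M →+ M := AddMonoidHom.mk' (fun y => (decompose ℳ y i : M))
    (by intro a b; simp [DirectSum.decompose_add])
  have key : ∀ y ∈ AddSubgroup.closure
      {x : M | ∃ (d : Fin n → ℤ) (a : Fin n → R),
        (∀ k, a k ∈ I ∧ a k ∈ 𝒜 (d k)) ∧ ∃ j : ℤ, ∃ m ∈ ℳ j, x = (∏ k, a k) • m},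
      f y ∈ Tgt := by
    refine fun y hy => AddSubgroup.closure_induction (fun g hg => ?_)
      (by simpa using Tgt.zero_mem)
      (fun u v _ _ hu hv => by rw [map_add]; exact Tgt.add_mem hu hv)
      (fun u _ hu => by rw [map_neg]; exact Tgt.neg_mem hu) hy
    obtain ⟨d, a, ha, j, m, hm, rfl⟩ := hg
    by_cases hd : ∀ k, 0 ≤ d k
    · by_cases hj : n₀ ≤ j
      · have hprod : (∏ k, a k) ∈ 𝒜 (∑ k, d k) :=
          SetLike.prod_mem_graded 𝒜 d a (fun k _ => (ha k).2)
        have hg : (∏ k, a k) • m ∈ ℳ (∑ k, d k + j) :=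
          SetLike.GradedSMul.smul_mem hprod hm
        by_cases hij : ∑ k, d k + j = i
        · have hfg : f ((∏ k, a k) • m) = (∏ k, a k) • m := by
            show ((decompose ℳ _ i : ℳ i) : M) = _
            exact DirectSum.decompose_of_mem_same ℳ (hij ▸ hg)
          rw [hfg]
          -- counting argument
          set Z : Finset (Fin n) := Finset.univ.filter (fun k => d k = 0) with hZ
          have hsplit : ∑ k ∈ Z, d k + ∑ k ∈ Zᶜ, d k = ∑ k, d k :=
            Finset.sum_add_sum_compl Z d
          have hZ0 : ∑ k ∈ Z, d k = 0 :=
            Finset.sum_eq_zero fun k hk => (Finset.mem_filter.mp hk).2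
          have hcard : (Zᶜ.card : ℤ) ≤ ∑ k ∈ Zᶜ, d k := by
            calc (Zᶜ.card : ℤ) = ∑ _k ∈ Zᶜ, (1 : ℤ) := by simp
            _ ≤ ∑ k ∈ Zᶜ, d k := Finset.sum_le_sum fun k hk => by
                have : d k ≠ 0 := by
                  simpa [hZ, Finset.mem_compl, Finset.mem_filter] using hk
                have := hd k
                omega
          have hcards : Z.card + Zᶜ.card = n := by
            simpa using Finset.card_add_card_compl Z
          have h1 : (Zᶜ.card : ℤ) ≤ i - j := by linarith
          have h2 : (Z.card : ℤ) + (Zᶜ.card : ℤ) = n := by exact_mod_cast hcards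
          have hm'le : m' ≤ Z.card := by
            rw [hm', Int.toNat_le]
            linarith
          obtain ⟨T, hTZ, hTcard⟩ := Finset.exists_subset_card_eq (s := Z) (n := m') hm'le
          have hT0 : ∀ k ∈ T, d k = 0 := fun k hk =>
            (Finset.mem_filter.mp (hTZ hk)).2
          let e : Fin m' ≃ {x // x ∈ T} := (finCongr hTcard.symm).trans T.equivFin.symm
          refine AddSubgroup.subset_closure ?_
          refine ⟨fun j => a (e j), fun j => ?_, (∏ k ∈ Tᶜ, a k) • m, ?_, ?_⟩
          · refine ⟨(ha _).1, ?_⟩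
            have h6 := (ha ((e j : {x // x ∈ T}) : Fin n)).2
            rwa [hT0 _ (e j).2] at h6
          · have hp : (∏ k ∈ Tᶜ, a k) ∈ 𝒜 (∑ k ∈ Tᶜ, d k) :=
              SetLike.prod_mem_graded 𝒜 d a (fun k _ => (ha k).2)
            have hsum : ∑ k ∈ Tᶜ, d k = i - j := by
              have h3 : ∑ k ∈ T, d k + ∑ k ∈ Tᶜ, d k = ∑ k, d k :=
                Finset.sum_add_sum_compl T d
              have h4 : ∑ k ∈ T, d k = 0 := Finset.sum_eq_zero hT0
              linarith
            have h7 : (∏ k ∈ Tᶜ, a k) • m ∈ ℳ ((i - j) + j) :=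
              SetLike.GradedSMul.smul_mem (hsum ▸ hp) hm
            have heq : i - j + j = i := by ring
            exact heq ▸ h7
          · have h5 : ∏ jj : Fin m', a (e jj) = ∏ k ∈ T, a k := by
              rw [← Finset.prod_coe_sort T a]
              exact Fintype.prod_equiv e _ _ (fun jj => rfl)
            rw [h5, ← mul_smul, Finset.prod_mul_prod_compl T a]
        · have : f ((∏ k, a k) • m) = 0 := by
            show ((decompose ℳ _ i : ℳ i) : M) = 0
            exact DirectSum.decompose_of_mem_ne ℳ hg hij
          rw [this]; exact Tgt.zero_mem
      · have : m = 0 := by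
          have := hlow j (lt_of_not_ge hj)
          simpa [this] using hm
        simp only [this, smul_zero, map_zero]
        exact Tgt.zero_mem
    · push_neg at hd
      obtain ⟨k, hk⟩ := hd
      have hak : a k = 0 := by
        have := hneg (d k) hk
        simpa [this] using (ha k).2
      have : (∏ k, a k) = 0 := Finset.prod_eq_zero (Finset.mem_univ k) hak
      simp only [this, zero_smul, map_zero]
      exact Tgt.zero_mem
  have hx' := aux_memA R 𝒜 M ℳ I hI n x hx
  have := key x hx'
  have hfx : f x = x := DirectSum.decompose_of_mem_same ℳ hxi
  rwa [hfx] at this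
end

section
/- Let k be a field and B a finite-dimensional associative k-algebra equipped with two nonnegative algebra gradings B = ⊕_{i≥0} B^i and B = ⊕_{i≥0} C^i, such that for each grading the degree-zero part (B^0, respectively C^0) is a semisimple k-algebra and B is generated as an algebra by its components of degrees 0 and 1 in that grading. Then both gradings induce the same filtration of B by powers of the Jacobson radical, namely rad(B)^i = ⊕_{j≥i} B^j = ⊕_{j≥i} C^j for all i ≥ 0, and consequently there is an isomorphism of graded k-algebras (B, ⊕_i B^i) ≅ (B, ⊕_i C^i) — obtained by composing the canonical graded isomorphisms of each graded algebra with the associated graded algebra ⊕_i rad(B)^i/rad(B)^{i+1} of the radical filtration — which induces the identity map on the semisimple quotient B/rad(B). -/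
/-!
STATEMENT 7: Let `k` be a field and `B` a finite-dimensional associative `k`-algebra with two
nonnegative algebra gradings `B = ⊕_{i≥0} 𝒜ⁱ = ⊕_{i≥0} ℬⁱ`, each with semisimple degree-zero
part and each generating `B` in degrees `0` and `1`.  Then both gradings induce the radical
filtration, i.e. `rad(B)^i = ⊕_{j≥i} 𝒜ʲ = ⊕_{j≥i} ℬʲ` for all `i ≥ 0`, and consequently there
is an isomorphism of graded `k`-algebras `(B, 𝒜) ≅ (B, ℬ)` (i.e. a `k`-algebra automorphism of
`B` carrying `𝒜ⁱ` onto `ℬⁱ` for every `i`) which induces the identity on `B / rad(B)` (i.e.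
`e b ≡ b mod rad(B)` for every `b`).

Here the Jacobson radical is `(⊥ : Ideal B).jacobson`, regarded as a `k`-submodule of `B`, and
`radPow k B i` denotes its `i`-th power (as a product of `k`-submodules), with the convention
`radPow k B 0 = ⊤`.
-/

open Submodule

/-- The powers of the Jacobson radical of `B`, as `k`-submodules, with the convention that the
`0`-th power is all of `B`. -/
noncomputable def radPow (k B : Type*) [CommSemiring k] [Ring B] [Algebra k B] (i : ℕ) :
    Submodule k B :=
  if i = 0 then ⊤ else (Submodule.restrictScalars k ((⊥ : Ideal B).jacobson)) ^ i

open DirectSum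

section Aux
variable {k B : Type*} [Field k] [Ring B] [Algebra k B]
variable (𝒜 : ℕ → Submodule k B) [GradedRing 𝒜]

/-- tail of the grading -/
noncomputable def stail (i : ℕ) : Submodule k B := ⨆ j ≥ i, 𝒜 j

lemma le_stail {i j : ℕ} (h : i ≤ j) : 𝒜 j ≤ stail 𝒜 i := le_iSup₂ (f := fun j _ => 𝒜 j) j h

lemma stail_zero : stail 𝒜 0 = ⊤ := by
  rw [eq_top_iff, ← (DirectSum.Decomposition.isInternal 𝒜).submodule_iSup_eq_top]
  exact iSup_le fun j => le_stail 𝒜 (Nat.zero_le j)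

lemma stail_anti {i i' : ℕ} (h : i ≤ i') : stail 𝒜 i' ≤ stail 𝒜 i :=
  iSup₂_le fun j hj => le_stail 𝒜 (h.trans hj)

lemma grmul_le (i j : ℕ) : 𝒜 i * 𝒜 j ≤ 𝒜 (i + j) :=
  Submodule.mul_le.2 fun a ha b hb => SetLike.mul_mem_graded ha hb

lemma stail_subtype (i : ℕ) : stail 𝒜 i = ⨆ j : {j : ℕ // i ≤ j}, 𝒜 j := by
  rw [stail, iSup_subtype]

set_option maxHeartbeats 1000000 in
lemma stail_mul_stail (i l : ℕ) : stail 𝒜 i * stail 𝒜 l ≤ stail 𝒜 (i + l) := by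
  rw [stail_subtype, stail_subtype, Submodule.iSup_mul]
  refine iSup_le fun j => ?_
  rw [Submodule.mul_iSup]
  refine iSup_le fun m => ?_
  exact (grmul_le 𝒜 j m).trans (le_stail 𝒜 (Nat.add_le_add j.2 m.2))

/-- the degree-`l` projection as a linear map -/
noncomputable def sproj (l : ℕ) : B →ₗ[k] B :=
  (𝒜 l).subtype ∘ₗ (DFinsupp.lapply l) ∘ₗ (DirectSum.decomposeLinearEquiv 𝒜).toLinearMap

lemma sproj_apply (l : ℕ) (x : B) : sproj 𝒜 l x = (DirectSum.decompose 𝒜 x l : B) := rfl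

lemma sproj_mem (l : ℕ) (x : B) : sproj 𝒜 l x ∈ 𝒜 l := SetLike.coe_mem _

lemma sproj_of_mem_same {l : ℕ} {x : B} (h : x ∈ 𝒜 l) : sproj 𝒜 l x = x :=
  DirectSum.decompose_of_mem_same 𝒜 h

lemma sproj_of_mem_ne {l j : ℕ} {x : B} (h : x ∈ 𝒜 j) (hne : l ≠ j) : sproj 𝒜 l x = 0 := by
  rw [sproj_apply]
  exact DirectSum.decompose_of_mem_ne 𝒜 h hne.symm

lemma stail_le_ker {l i : ℕ} (h : l < i) : stail 𝒜 i ≤ LinearMap.ker (sproj 𝒜 l) :=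
  iSup₂_le fun j hj x hx => LinearMap.mem_ker.2 (sproj_of_mem_ne 𝒜 hx (by omega))

lemma sub_sproj_mem {i : ℕ} {x : B} (hx : x ∈ stail 𝒜 i) :
    x - sproj 𝒜 i x ∈ stail 𝒜 (i + 1) := by
  classical
  have hlow : ∀ l < i, sproj 𝒜 l x = 0 := fun l hl =>
    LinearMap.mem_ker.1 (stail_le_ker 𝒜 hl hx)
  have hsum := DirectSum.sum_support_decompose 𝒜 x
  have : x - sproj 𝒜 i x =
      ∑ l ∈ (DirectSum.decompose 𝒜 x).support.erase i, (DirectSum.decompose 𝒜 x l : B) := by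
    by_cases hi : i ∈ (DirectSum.decompose 𝒜 x).support
    · rw [Finset.sum_erase_eq_sub hi, hsum, sproj_apply]
    · rw [Finset.erase_eq_of_notMem hi]
      have : sproj 𝒜 i x = 0 := by
        rw [sproj_apply]
        simpa using DFinsupp.notMem_support_iff.1 hi
      rw [this, sub_zero]
      exact hsum.symm
  rw [this]
  refine Submodule.sum_mem _ fun l hl => ?_
  have hne : l ≠ i := Finset.ne_of_mem_erase hl
  have hmem : l ∈ (DirectSum.decompose 𝒜 x).support := Finset.mem_of_mem_erase hl
  have hge : i ≤ l := by
    by_contra hlt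
    have := hlow l (by omega)
    rw [sproj_apply] at this
    exact absurd (by exact_mod_cast this) (by simpa using DFinsupp.mem_support_iff.1 hmem)
  exact le_stail 𝒜 (by omega) (SetLike.coe_mem _)

lemma grade_inf_stail {i : ℕ} {x : B} (h1 : x ∈ 𝒜 i) (h2 : x ∈ stail 𝒜 (i + 1)) : x = 0 := by
  have := LinearMap.mem_ker.1 (stail_le_ker 𝒜 (Nat.lt_succ_self i) h2)
  rwa [sproj_of_mem_same 𝒜 h1] at this

end Aux

lemma semis_jacobson_bot (R : Type*) [Ring R] [IsSemisimpleRing R] :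
    (⊥ : Ideal R).jacobson = ⊥ := by
  obtain ⟨C, hC⟩ := exists_isCompl ((⊥ : Ideal R).jacobson)
  rcases eq_top_or_exists_le_coatom C with h | ⟨M, hM, hle⟩
  · have := hC.disjoint.eq_bot
    rwa [h, inf_top_eq] at this
  · exfalso
    have hMmax : M.IsMaximal := Ideal.isMaximal_def.2 hM
    have h1 : (⊥ : Ideal R).jacobson ≤ M := sInf_le ⟨bot_le, hMmax⟩
    have h2 : (⊤ : Ideal R) ≤ M := hC.sup_eq_top ▸ sup_le h1 hle
    exact hM.1 (top_le_iff.1 h2)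

section Rad
variable {k B : Type*} [Field k] [Ring B] [Algebra k B]
variable (𝒜 : ℕ → Submodule k B) [GradedRing 𝒜]

lemma top_mul_stail (i : ℕ) : (⊤ : Submodule k B) * stail 𝒜 i ≤ stail 𝒜 i := by
  have := stail_mul_stail 𝒜 0 i
  rwa [stail_zero, Nat.zero_add] at this

lemma stail_mul_top (i : ℕ) : stail 𝒜 i * (⊤ : Submodule k B) ≤ stail 𝒜 i := by
  have := stail_mul_stail 𝒜 i 0
  rwa [stail_zero, Nat.add_zero] at this

lemma pow_le_stail : ∀ n, 1 ≤ n → (stail 𝒜 1) ^ n ≤ stail 𝒜 n := by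
  refine Nat.le_induction (by rw [pow_one]) fun n hn ih => ?_
  rw [pow_succ]
  exact (mul_le_mul_left ih _).trans (stail_mul_stail 𝒜 n 1)

lemma pow_mul_top : ∀ n, 1 ≤ n → (stail 𝒜 1) ^ n * ⊤ ≤ (stail 𝒜 1) ^ n := by
  refine Nat.le_induction (by rw [pow_one]; exact stail_mul_top 𝒜 1) fun n hn ih => ?_
  rw [pow_succ, mul_assoc]
  calc (stail 𝒜 1) ^ n * (stail 𝒜 1 * ⊤) ≤ (stail 𝒜 1) ^ n * stail 𝒜 1 :=
        mul_le_mul_right (stail_mul_top 𝒜 1) _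
    _ = (stail 𝒜 1) ^ (n + 1) := (pow_succ _ _).symm

lemma top_mul_pow : ∀ n, 1 ≤ n → (⊤ : Submodule k B) * (stail 𝒜 1) ^ n ≤ (stail 𝒜 1) ^ n := by
  refine Nat.le_induction (by rw [pow_one]; exact top_mul_stail 𝒜 1) fun n hn ih => ?_
  rw [pow_succ, ← mul_assoc]
  exact (mul_le_mul_left ih _).trans le_rfl

lemma pow_le_pow_stail {i j : ℕ} (h1 : 1 ≤ i) (hij : i ≤ j) :
    (stail 𝒜 1) ^ j ≤ (stail 𝒜 1) ^ i := by
  have : j = i + (j - i) := by omega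
  rw [this, pow_add]
  exact (mul_le_mul_right le_top _).trans (pow_mul_top 𝒜 i h1)

lemma exists_stail_bot [FiniteDimensional k B] : ∃ N, 1 ≤ N ∧ stail 𝒜 N = ⊥ := by
  classical
  have hind := (DirectSum.Decomposition.isInternal 𝒜).submodule_iSupIndep
  have inst : Fintype {i : ℕ // 𝒜 i ≠ ⊥} := iSupIndep.fintypeNeBotOfFiniteDimensional hind
  set F : Finset ℕ := Finset.image (Subtype.val : {i : ℕ // 𝒜 i ≠ ⊥} → ℕ) Finset.univ with hF
  refine ⟨F.sup id + 1, le_add_self, ?_⟩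
  rw [eq_bot_iff]
  refine iSup₂_le fun j hj => ?_
  by_cases hbot : 𝒜 j = ⊥
  · rw [hbot]
  · have hjF : j ∈ F := Finset.mem_image.2 ⟨⟨j, hbot⟩, Finset.mem_univ _, rfl⟩
    have := Finset.le_sup (f := id) hjF
    simp only [id] at this
    omega

lemma stail_one_nilpotent [FiniteDimensional k B] {x : B} (hx : x ∈ stail 𝒜 1) :
    IsNilpotent x := by
  obtain ⟨N, hN1, hNbot⟩ := exists_stail_bot 𝒜
  refine ⟨N, ?_⟩
  have : x ^ N ∈ (stail 𝒜 1) ^ N := Submodule.pow_mem_pow _ hx N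
  have := (pow_le_stail 𝒜 N hN1) this
  rwa [hNbot, Submodule.mem_bot] at this

lemma projZero_surjective : Function.Surjective (GradedRing.projZeroRingHom' 𝒜) :=
  fun a => ⟨a, GradedRing.projZeroRingHom'_apply_coe 𝒜 a⟩

lemma mem_ker_iff_stail (x : B) :
    x ∈ RingHom.ker (GradedRing.projZeroRingHom' 𝒜) ↔ x ∈ stail 𝒜 1 := by
  have hcoe : ((GradedRing.projZeroRingHom' 𝒜 x : 𝒜 0) : B) = sproj 𝒜 0 x := by
    rw [GradedRing.coe_projZeroRingHom'_apply, GradedRing.projZeroRingHom_apply, sproj_apply]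
  constructor
  · intro hx
    rw [RingHom.mem_ker] at hx
    have h0 : sproj 𝒜 0 x = 0 := by rw [← hcoe, hx]; rfl
    have : x ∈ stail 𝒜 0 := by rw [stail_zero]; trivial
    have := sub_sproj_mem 𝒜 this
    rwa [h0, sub_zero] at this
  · intro hx
    rw [RingHom.mem_ker]
    have h0 : sproj 𝒜 0 x = 0 := LinearMap.mem_ker.1 (stail_le_ker 𝒜 Nat.zero_lt_one hx)
    ext
    rw [hcoe, h0]
    rfl

lemma jacobson_eq_ker [FiniteDimensional k B] (hss : IsSemisimpleRing (𝒜 0)) :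
    (⊥ : Ideal B).jacobson = RingHom.ker (GradedRing.projZeroRingHom' 𝒜) := by
  refine le_antisymm ?_ ?_
  · have hsurj := projZero_surjective 𝒜
    have hker : (RingHom.ker (GradedRing.projZeroRingHom' 𝒜)).jacobson
        = RingHom.ker (GradedRing.projZeroRingHom' 𝒜) := by
      have hcj := Ideal.comap_jacobson_of_surjective hsurj
        (K := (⊥ : Ideal (𝒜 0)))
      rw [semis_jacobson_bot] at hcj
      rw [← RingHom.ker_eq_comap_bot] at hcj
      exact hcj.symm
    exact le_trans (Ideal.jacobson_mono bot_le) hker.le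
  · intro x hx
    rw [Ideal.mem_jacobson_iff]
    intro y
    have hx1 : x ∈ stail 𝒜 1 := (mem_ker_iff_stail 𝒜 x).1 hx
    have hyx : y * x ∈ stail 𝒜 1 :=
      top_mul_stail 𝒜 1 (Submodule.mul_mem_mul Submodule.mem_top hx1)
    obtain ⟨z, hz⟩ := (IsNilpotent.isUnit_one_add (stail_one_nilpotent 𝒜 hyx)).exists_left_inv
    refine ⟨z, ?_⟩
    have hzz : z * y * x + z - 1 = z * (1 + y * x) - 1 := by noncomm_ring
    rw [Ideal.mem_bot, hzz, hz, sub_self]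

lemma grade_le_pow (hgen : Algebra.adjoin k ((𝒜 0 : Set B) ∪ (𝒜 1 : Set B)) = ⊤) :
    ∀ m, 1 ≤ m → 𝒜 m ≤ (stail 𝒜 1) ^ m := by
  classical
  set P : ℕ → Submodule k B := fun j => if j = 0 then ⊤ else (stail 𝒜 1) ^ j with hP
  have hPmul : ∀ j l, P j * P l ≤ P (j + l) := by
    intro j l
    rcases Nat.eq_zero_or_pos j with hj | hj
    · rcases Nat.eq_zero_or_pos l with hl | hl
      · subst hj; subst hl; simp [hP]
      · subst hj
        simp only [hP, if_neg (by omega : l ≠ 0), Nat.zero_add, if_pos rfl]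
        exact top_mul_pow 𝒜 l hl
    · rcases Nat.eq_zero_or_pos l with hl | hl
      · subst hl
        simp only [hP, if_neg (by omega : j ≠ 0), Nat.add_zero, if_pos rfl]
        exact pow_mul_top 𝒜 j hj
      · simp only [hP, if_neg (by omega : j ≠ 0), if_neg (by omega : l ≠ 0),
          if_neg (by omega : j + l ≠ 0)]
        rw [← pow_add]
  set G : ℕ → Submodule k B := fun j => 𝒜 j ⊓ P j with hG
  have hGA : ∀ j, G j ≤ 𝒜 j := fun j => inf_le_left
  have hQtop : (⨆ j, G j) = ⊤ := by
    have h1 : (1 : B) ∈ ⨆ j, G j := by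
      refine le_iSup G 0 (Submodule.mem_inf.2 ⟨SetLike.one_mem_graded 𝒜, by simp [hP]⟩)
    have hmul : ∀ x y : B, x ∈ ⨆ j, G j → y ∈ ⨆ j, G j → x * y ∈ ⨆ j, G j := by
      intro x y hx hy
      have hle : (⨆ j, G j) * (⨆ j, G j) ≤ ⨆ j, G j := by
        rw [Submodule.iSup_mul]
        refine iSup_le fun j => ?_
        rw [Submodule.mul_iSup]
        refine iSup_le fun l => ?_
        refine le_trans ?_ (le_iSup G (j + l))
        show G j * G l ≤ 𝒜 (j + l) ⊓ P (j + l)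
        refine le_inf ?_ ?_
        · exact (mul_le_mul' inf_le_left inf_le_left).trans (grmul_le 𝒜 j l)
        · exact (mul_le_mul' inf_le_right inf_le_right).trans (hPmul j l)
      exact hle (Submodule.mul_mem_mul hx hy)
    have hle2 : Algebra.adjoin k ((𝒜 0 : Set B) ∪ (𝒜 1 : Set B)) ≤
        Submodule.toSubalgebra (⨆ j, G j) h1 hmul := by
      rw [Algebra.adjoin_le_iff]
      rintro x (hx | hx)
      · exact le_iSup G 0 (Submodule.mem_inf.2 ⟨hx, by simp [hP]⟩)
      · refine le_iSup G 1 (Submodule.mem_inf.2 ⟨hx, ?_⟩)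
        show x ∈ P 1
        simp only [hP, if_neg one_ne_zero, pow_one]
        exact le_stail 𝒜 le_rfl hx
    have h2 : (⊤ : Subalgebra k B) ≤ Submodule.toSubalgebra (⨆ j, G j) h1 hmul := hgen ▸ hle2
    rw [eq_top_iff]
    intro x _
    exact h2 Algebra.mem_top
  intro m hm x hx
  have hxQ : x ∈ ⨆ j, G j := hQtop ▸ Submodule.mem_top
  have key : sproj 𝒜 m x ∈ G m := by
    refine Submodule.iSup_induction G (motive := fun y => sproj 𝒜 m y ∈ G m) hxQ ?_ ?_ ?_
    · intro j y hy
      by_cases hjm : j = m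
      · subst hjm
        rwa [sproj_of_mem_same 𝒜 (hGA j hy)]
      · rw [sproj_of_mem_ne 𝒜 (hGA j hy) (Ne.symm hjm)]
        exact Submodule.zero_mem _
    · show sproj 𝒜 m 0 ∈ G m
      rw [map_zero]; exact Submodule.zero_mem _
    · intro a b ha hb
      show sproj 𝒜 m (a + b) ∈ G m
      rw [map_add]; exact Submodule.add_mem _ ha hb
  rw [sproj_of_mem_same 𝒜 hx] at key
  simpa only [hP, if_neg (show m ≠ 0 by omega)] using (Submodule.mem_inf.1 key).2

end Rad

section RadEq
variable {k B : Type*} [Field k] [Ring B] [Algebra k B] [FiniteDimensional k B]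
variable (𝒜 : ℕ → Submodule k B) [GradedRing 𝒜]

lemma restrict_jacobson_eq (hss : IsSemisimpleRing (𝒜 0)) :
    Submodule.restrictScalars k ((⊥ : Ideal B).jacobson) = stail 𝒜 1 := by
  ext x
  rw [Submodule.restrictScalars_mem]
  rw [jacobson_eq_ker 𝒜 hss]
  exact mem_ker_iff_stail 𝒜 x

lemma pow_stail_eq (hgen : Algebra.adjoin k ((𝒜 0 : Set B) ∪ (𝒜 1 : Set B)) = ⊤)
    {i : ℕ} (hi : 1 ≤ i) : (stail 𝒜 1) ^ i = stail 𝒜 i := by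
  refine le_antisymm (pow_le_stail 𝒜 i hi) ?_
  refine iSup₂_le fun j hj => ?_
  exact (grade_le_pow 𝒜 hgen j (hi.trans hj)).trans (pow_le_pow_stail 𝒜 hi hj)

lemma radPow_eq_stail (hss : IsSemisimpleRing (𝒜 0))
    (hgen : Algebra.adjoin k ((𝒜 0 : Set B) ∪ (𝒜 1 : Set B)) = ⊤) (i : ℕ) :
    radPow k B i = stail 𝒜 i := by
  rcases Nat.eq_zero_or_pos i with hi | hi
  · subst hi
    rw [radPow, if_pos rfl, stail_zero]
  · rw [radPow, if_neg (by omega : i ≠ 0), restrict_jacobson_eq 𝒜 hss, pow_stail_eq 𝒜 hgen hi]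

end RadEq

section Iso
variable {k B : Type*} [Field k] [Ring B] [Algebra k B]
variable (𝒜 : ℕ → Submodule k B) [GradedRing 𝒜]
variable (ℬ : ℕ → Submodule k B) [GradedRing ℬ]

section Half
variable (hcomm : ∀ i, stail 𝒜 i = stail (k := k) (B := B) ℬ i)

include hcomm in
lemma key_sub {i : ℕ} {a : B} (ha : a ∈ 𝒜 i) :
    sproj ℬ i a - a ∈ stail ℬ (i + 1) := by
  have h1 : a ∈ stail ℬ i := hcomm i ▸ le_stail 𝒜 le_rfl ha
  have := sub_sproj_mem ℬ h1
  simpa using Submodule.neg_mem _ this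

/-- the degree-wise comparison map -/
noncomputable def psi (i : ℕ) : 𝒜 i →ₗ[k] ℬ i :=
  LinearMap.codRestrict (ℬ i) ((sproj ℬ i) ∘ₗ (𝒜 i).subtype) fun a => sproj_mem ℬ i a

lemma psi_coe (i : ℕ) (a : 𝒜 i) : (psi 𝒜 ℬ i a : B) = sproj ℬ i (a : B) := rfl

include hcomm in
lemma psi_comp_psi (i : ℕ) (a : 𝒜 i) : psi ℬ 𝒜 i (psi 𝒜 ℬ i a) = a := by
  ext
  rw [psi_coe, psi_coe]
  have hr := key_sub 𝒜 ℬ hcomm a.2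
  set r : B := sproj ℬ i (a : B) - (a : B) with hr'
  have heq : sproj ℬ i (a : B) = (a : B) + r := by rw [hr']; abel
  rw [heq, map_add]
  have hr0 : sproj 𝒜 i r = 0 := by
    refine LinearMap.mem_ker.1 (stail_le_ker 𝒜 (Nat.lt_succ_self i) ?_)
    rw [hcomm (i + 1)]
    exact hr
  rw [hr0, add_zero, sproj_of_mem_same 𝒜 a.2]

/-- degree-wise linear equivalence -/
noncomputable def eqv (i : ℕ) : 𝒜 i ≃ₗ[k] ℬ i :=
  LinearEquiv.ofLinear (psi 𝒜 ℬ i) (psi ℬ 𝒜 i)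
    (LinearMap.ext fun b => psi_comp_psi ℬ 𝒜 (fun j => (hcomm j).symm) i b)
    (LinearMap.ext fun a => psi_comp_psi 𝒜 ℬ hcomm i a)

/-- the global linear equivalence -/
noncomputable def glin : B ≃ₗ[k] B :=
  (DirectSum.decomposeLinearEquiv 𝒜).trans
    ((DFinsupp.mapRange.linearEquiv (eqv 𝒜 ℬ hcomm)).trans
      (DirectSum.decomposeLinearEquiv ℬ).symm)

lemma glin_apply_of_mem {i : ℕ} {a : B} (ha : a ∈ 𝒜 i) :
    glin 𝒜 ℬ hcomm a = sproj ℬ i a := by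
  classical
  have h1 : DirectSum.decompose 𝒜 a = DirectSum.of (fun j => 𝒜 j) i ⟨a, ha⟩ :=
    DirectSum.decompose_of_mem 𝒜 ha
  rw [glin]
  simp only [LinearEquiv.trans_apply, DirectSum.decomposeLinearEquiv_apply,
    DirectSum.decomposeLinearEquiv_symm_apply]
  rw [h1]
  have h2 : DFinsupp.mapRange.linearEquiv (eqv 𝒜 ℬ hcomm) (DirectSum.of (fun j => 𝒜 j) i ⟨a, ha⟩)
      = DirectSum.of (fun j => ℬ j) i (eqv 𝒜 ℬ hcomm i ⟨a, ha⟩) := by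
    rw [DFinsupp.mapRange.linearEquiv_apply]
    exact DFinsupp.mapRange_single
  refine Eq.trans (congrArg (DirectSum.decomposeLinearEquiv ℬ).symm h2) ?_
  rw [DirectSum.decomposeLinearEquiv_symm_apply, DirectSum.decompose_symm_of]
  rfl

end Half
end Iso

section Iso2
variable {k B : Type*} [Field k] [Ring B] [Algebra k B]
variable (𝒜 : ℕ → Submodule k B) [GradedRing 𝒜]
variable (ℬ : ℕ → Submodule k B) [GradedRing ℬ]
variable (hcomm : ∀ i, stail 𝒜 i = stail (k := k) (B := B) ℬ i)

include hcomm in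
lemma hom_mul_aux {i j : ℕ} {a b : B} (ha : a ∈ 𝒜 i) (hb : b ∈ 𝒜 j) :
    sproj ℬ (i + j) (a * b) = sproj ℬ i a * sproj ℬ j b := by
  have hab : a * b ∈ 𝒜 (i + j) := SetLike.mul_mem_graded ha hb
  set d : B := sproj ℬ (i + j) (a * b) - sproj ℬ i a * sproj ℬ j b with hd
  have hd1 : d ∈ ℬ (i + j) :=
    Submodule.sub_mem _ (sproj_mem ℬ _ _) (SetLike.mul_mem_graded (sproj_mem ℬ i a) (sproj_mem ℬ j b))
  have h1 : sproj ℬ (i + j) (a * b) - a * b ∈ stail ℬ (i + j + 1) := key_sub 𝒜 ℬ hcomm hab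
  have h2 : sproj ℬ i a * sproj ℬ j b - a * b ∈ stail ℬ (i + j + 1) := by
    set r : B := sproj ℬ i a - a with hr
    set s : B := sproj ℬ j b - b with hs
    have hrm : r ∈ stail ℬ (i + 1) := key_sub 𝒜 ℬ hcomm ha
    have hsm : s ∈ stail ℬ (j + 1) := key_sub 𝒜 ℬ hcomm hb
    have ham : a ∈ stail ℬ i := hcomm i ▸ le_stail 𝒜 le_rfl ha
    have hbm : b ∈ stail ℬ j := hcomm j ▸ le_stail 𝒜 le_rfl hb
    have heq : sproj ℬ i a * sproj ℬ j b - a * b = a * s + r * b + r * s := by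
      rw [hr, hs]; noncomm_ring
    rw [heq]
    refine Submodule.add_mem _ (Submodule.add_mem _ ?_ ?_) ?_
    · exact stail_mul_stail ℬ i (j + 1) (Submodule.mul_mem_mul ham hsm)
    · have := stail_mul_stail ℬ (i + 1) j (Submodule.mul_mem_mul hrm hbm)
      have he : i + 1 + j = i + j + 1 := by omega
      rwa [he] at this
    · have := stail_mul_stail ℬ (i + 1) (j + 1) (Submodule.mul_mem_mul hrm hsm)
      exact stail_anti ℬ (by omega) this
  have hd2 : d ∈ stail ℬ (i + j + 1) := by
    have heq2 : d = (sproj ℬ (i + j) (a * b) - a * b) - (sproj ℬ i a * sproj ℬ j b - a * b) := by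
      rw [hd]; abel
    rw [heq2]
    exact Submodule.sub_mem _ h1 h2
  have : d = 0 := grade_inf_stail ℬ hd1 hd2
  rw [hd, sub_eq_zero] at this
  exact this

include hcomm in
lemma glin_one : glin 𝒜 ℬ hcomm 1 = 1 := by
  rw [glin_apply_of_mem 𝒜 ℬ hcomm (SetLike.one_mem_graded 𝒜)]
  exact sproj_of_mem_same ℬ (SetLike.one_mem_graded ℬ)

include hcomm in
lemma glin_mul (x y : B) : glin 𝒜 ℬ hcomm (x * y) = glin 𝒜 ℬ hcomm x * glin 𝒜 ℬ hcomm y := by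
  induction x using DirectSum.Decomposition.inductionOn 𝒜 generalizing y with
  | zero => simp
  | @homogeneous i m =>
    induction y using DirectSum.Decomposition.inductionOn 𝒜 with
    | zero => simp
    | @homogeneous j n =>
      rw [glin_apply_of_mem 𝒜 ℬ hcomm m.2, glin_apply_of_mem 𝒜 ℬ hcomm n.2,
        glin_apply_of_mem 𝒜 ℬ hcomm (SetLike.mul_mem_graded m.2 n.2)]
      exact hom_mul_aux 𝒜 ℬ hcomm m.2 n.2
    | add y z hy hz => rw [mul_add, map_add, map_add, hy, hz, mul_add]
  | add x z hx hz => rw [add_mul, map_add, map_add, hx y, hz y, add_mul]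

/-- the graded algebra equivalence -/
noncomputable def galg : B ≃ₐ[k] B :=
  AlgEquiv.ofLinearEquiv (glin 𝒜 ℬ hcomm) (glin_one 𝒜 ℬ hcomm) (glin_mul 𝒜 ℬ hcomm)

include hcomm in
lemma galg_map_grade (i : ℕ) :
    Submodule.map (galg 𝒜 ℬ hcomm).toLinearMap (𝒜 i) = ℬ i := by
  refine le_antisymm ?_ ?_
  · rintro _ ⟨a, ha, rfl⟩
    have : (galg 𝒜 ℬ hcomm).toLinearMap a = sproj ℬ i a := glin_apply_of_mem 𝒜 ℬ hcomm ha
    rw [this]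
    exact sproj_mem ℬ i a
  · intro b hb
    refine ⟨((eqv 𝒜 ℬ hcomm i).symm ⟨b, hb⟩ : B), SetLike.coe_mem _, ?_⟩
    have h1 : (galg 𝒜 ℬ hcomm).toLinearMap ((eqv 𝒜 ℬ hcomm i).symm ⟨b, hb⟩ : B)
        = sproj ℬ i ((eqv 𝒜 ℬ hcomm i).symm ⟨b, hb⟩ : B) :=
      glin_apply_of_mem 𝒜 ℬ hcomm (SetLike.coe_mem _)
    rw [h1]
    have h2 : (eqv 𝒜 ℬ hcomm i) ((eqv 𝒜 ℬ hcomm i).symm ⟨b, hb⟩) = ⟨b, hb⟩ :=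
      (eqv 𝒜 ℬ hcomm i).apply_symm_apply _
    calc sproj ℬ i ((eqv 𝒜 ℬ hcomm i).symm ⟨b, hb⟩ : B)
        = ((eqv 𝒜 ℬ hcomm i) ((eqv 𝒜 ℬ hcomm i).symm ⟨b, hb⟩) : B) := rfl
      _ = b := by rw [h2]

include hcomm in
lemma galg_sub_mem (b : B) : galg 𝒜 ℬ hcomm b - b ∈ stail 𝒜 1 := by
  induction b using DirectSum.Decomposition.inductionOn 𝒜 with
  | zero => rw [map_zero, sub_zero]; exact Submodule.zero_mem _
  | @homogeneous i m =>
    have : galg 𝒜 ℬ hcomm (m : B) = sproj ℬ i (m : B) := glin_apply_of_mem 𝒜 ℬ hcomm m.2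
    rw [this]
    have := key_sub 𝒜 ℬ hcomm m.2
    have h2 : sproj ℬ i (m : B) - (m : B) ∈ stail ℬ 1 := stail_anti ℬ (by omega) this
    rw [hcomm 1]
    exact h2
  | add x z hx hz =>
    have : galg 𝒜 ℬ hcomm (x + z) - (x + z)
        = (galg 𝒜 ℬ hcomm x - x) + (galg 𝒜 ℬ hcomm z - z) := by
      rw [map_add]; abel
    rw [this]
    exact Submodule.add_mem _ hx hz

end Iso2

theorem statement7
    (k B : Type*) [Field k] [Ring B] [Algebra k B] [FiniteDimensional k B]
    (𝒜 : ℕ → Submodule k B) [GradedRing 𝒜]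
    (ℬ : ℕ → Submodule k B) [GradedRing ℬ]
    (hssA : IsSemisimpleRing (𝒜 0)) (hssB : IsSemisimpleRing (ℬ 0))
    (hgenA : Algebra.adjoin k ((𝒜 0 : Set B) ∪ (𝒜 1 : Set B)) = ⊤)
    (hgenB : Algebra.adjoin k ((ℬ 0 : Set B) ∪ (ℬ 1 : Set B)) = ⊤) :
    -- both gradings induce the radical filtration:
    (∀ i : ℕ, radPow k B i = ⨆ j ≥ i, 𝒜 j ∧ radPow k B i = ⨆ j ≥ i, ℬ j)
    -- and there is an isomorphism of graded `k`-algebras `(B, 𝒜) ≅ (B, ℬ)` inducing the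
    -- identity on `B / rad(B)`:
    ∧ (∃ e : B ≃ₐ[k] B,
        (∀ i : ℕ, Submodule.map (e.toLinearMap) (𝒜 i) = ℬ i) ∧
        (∀ b : B, e b - b ∈ (⊥ : Ideal B).jacobson)) := by
  have hA : ∀ i, radPow k B i = stail 𝒜 i := radPow_eq_stail 𝒜 hssA hgenA
  have hB : ∀ i, radPow k B i = stail ℬ i := radPow_eq_stail ℬ hssB hgenB
  have hcomm : ∀ i, stail 𝒜 i = stail (k := k) (B := B) ℬ i :=
    fun i => (hA i).symm.trans (hB i)
  refine ⟨fun i => ⟨hA i, hB i⟩, ⟨galg 𝒜 ℬ hcomm, galg_map_grade 𝒜 ℬ hcomm, ?_⟩⟩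
  intro b
  have hmem := galg_sub_mem 𝒜 ℬ hcomm b
  rw [jacobson_eq_ker 𝒜 hssA]
  exact (mem_ker_iff_stail 𝒜 _).2 hmem
end
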